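/- For integers \(k \ge 1\) and even integer \(\beta \ge 2\), the identity \(\binom{\beta}{\beta/2+k}\binom{\beta}{\beta/2}^{-1} \frac{\Gamma_{\beta/2+k,\beta}\,\Gamma_{\beta/2-k,\beta}}{(\Gamma_{\beta/2,\beta})^2} = \frac{1}{2^{2k^2/\beta}} \prod_{j=1}^{k} \frac{\Gamma(1+2j/\beta)}{\Gamma(1+2(j-k)/\beta)}\) holds, where \(0 \le k \le \beta/2\). -/

import Mathlib

open Real Finset
open scoped Nat

/-- Factorial as a product shifted. -/
lemma fact_prod_shift (a : ℕ) : ∀ t : ℕ, (a + t)! = a ! * ∏ i ∈ Finset.Icc 1 t, (a + i) := by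
  intro t
  induction t with
  | zero => simp
  | succ t ih =>
      rw [Finset.prod_Icc_succ_top (by omega), ← mul_assoc, ← ih]
      rw [show a + (t+1) = (a + t) + 1 from by ring, Nat.factorial_succ]
      ring

/-- The Mehta constant `Γ_{n,β}`. -/
noncomputable def GammaMehta (n : ℕ) (β : ℝ) : ℝ :=
  Real.pi ^ ((n : ℝ) / 2) / 2 ^ ((n * (n - 1) : ℝ) / β) *
    ∏ j ∈ Finset.Icc 2 n, Real.Gamma (1 + 2 * j / β) / Real.Gamma (1 + 2 / β)

/-- Ratio identity for the Mehta constants. -/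
theorem gammaMehta_ratio (β k : ℕ) (hβ : Even β) (hβ2 : 2 ≤ β) (hk : 1 ≤ k)
    (hkβ : k ≤ β / 2) :
    ((β.choose (β / 2 + k) : ℝ) / (β.choose (β / 2) : ℝ)) *
        (GammaMehta (β / 2 + k) β * GammaMehta (β / 2 - k) β) /
          (GammaMehta (β / 2) β) ^ 2
      = 1 / 2 ^ ((2 * k ^ 2 : ℝ) / β) *
          ∏ j ∈ Finset.Icc 1 k,
            Real.Gamma (1 + 2 * j / β) / Real.Gamma (1 + 2 * ((j : ℝ) - k) / β) := by
  obtain ⟨m, rfl⟩ := hβ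
  have hm1 : 1 ≤ m := by omega
  have hd : (m + m) / 2 = m := by omega
  rw [hd]
  rw [hd] at hkβ
  have hkm : k ≤ m := hkβ
  have hm0 : (0:ℝ) < m := by exact_mod_cast hm1
  simp only [GammaMehta]
  set b : ℝ := ((m + m : ℕ) : ℝ) with hbdef
  have hb2m : b = 2 * m := by rw [hbdef]; push_cast; ring
  have hb0 : (0:ℝ) < b := by rw [hb2m]; linarith
  have hk1 : (1:ℝ) ≤ k := by exact_mod_cast hk
  have hkmR : (k:ℝ) ≤ m := by exact_mod_cast hkm
  -- Gamma positivity
  have hGpos : ∀ j : ℕ, 0 < Real.Gamma (1 + 2 * (j:ℝ) / b) := fun j =>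
    Real.Gamma_pos_of_pos (by positivity)
  have hc0 : 0 < Real.Gamma (1 + 2 / b) := Real.Gamma_pos_of_pos (by positivity)
  -- the basic per-term function
  set g : ℕ → ℝ := fun j => Real.Gamma (1 + 2 * (j:ℝ) / b) / Real.Gamma (1 + 2 / b) with hg
  have hgpos : ∀ j : ℕ, 0 < g j := fun j => div_pos (hGpos j) hc0
  -- products over `Icc 2 n` equal products over `Ioc 0 n`
  have hIcc : ∀ n : ℕ, ∏ j ∈ Finset.Icc 2 n, g j = ∏ j ∈ Finset.Ioc 0 n, g j := by
    intro n
    match n with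
    | 0 => simp
    | (n+1) =>
        rw [← Finset.prod_Ioc_consecutive g (by omega : 0 ≤ 1) (by omega : 1 ≤ n+1)]
        rw [show (1:ℕ) = 0 + 1 from rfl, Nat.Ioc_succ_singleton, Finset.prod_singleton]
        rw [show Finset.Icc 2 (n+1) = Finset.Ioc (0+1) (n+1) from by
          rw [← Finset.Icc_add_one_left_eq_Ioc]; rfl]
        have : g (0+1) = 1 := by
          simp only [hg, zero_add, Nat.cast_one, mul_one]
          exact div_self hc0.ne'
        rw [this, one_mul]
  -- splitting off the tails
  have hsplit1 : ∏ j ∈ Finset.Ioc 0 (m+k), g j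
      = (∏ j ∈ Finset.Ioc 0 m, g j) * ∏ j ∈ Finset.Ioc m (m+k), g j := by
    rw [Finset.prod_Ioc_consecutive g (by omega : 0 ≤ m) (by omega : m ≤ m + k)]
  have hsplit2 : ∏ j ∈ Finset.Ioc 0 m, g j
      = (∏ j ∈ Finset.Ioc 0 (m-k), g j) * ∏ j ∈ Finset.Ioc (m-k) m, g j := by
    rw [Finset.prod_Ioc_consecutive g (by omega : 0 ≤ m - k) (by omega : m - k ≤ m)]
  -- reindexing the tails
  have hre1 : ∏ j ∈ Finset.Ioc m (m+k), g j = ∏ i ∈ Finset.Icc 1 k, g (m + i) := by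
    have h := Finset.prod_map (Finset.Ioc 0 k) (addLeftEmbedding m) g
    rw [Finset.map_add_left_Ioc] at h
    simp only [addLeftEmbedding_apply, Nat.add_zero] at h
    rw [h, ← Finset.Icc_add_one_left_eq_Ioc]; rfl
  have hre2 : ∏ j ∈ Finset.Ioc (m-k) m, g j = ∏ i ∈ Finset.Icc 1 k, g (m - k + i) := by
    have h := Finset.prod_map (Finset.Ioc 0 k) (addLeftEmbedding (m-k)) g
    rw [Finset.map_add_left_Ioc] at h
    simp only [addLeftEmbedding_apply, Nat.add_zero] at h
    rw [show m - k + k = m from by omega] at h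
    rw [h, ← Finset.Icc_add_one_left_eq_Ioc]; rfl
  -- choose ratio as a product ratio
  have hfact1 : ((m+k)! : ℝ) = (m ! : ℝ) * ∏ i ∈ Finset.Icc 1 k, ((m:ℝ) + i) := by
    have h := fact_prod_shift m k
    calc ((m+k)! : ℝ) = ((m ! * ∏ i ∈ Finset.Icc 1 k, (m + i) : ℕ) : ℝ) := by rw [← h]
    _ = (m ! : ℝ) * ∏ i ∈ Finset.Icc 1 k, ((m:ℝ) + i) := by push_cast; ring
  have hfact2 : (m ! : ℝ) = ((m-k)! : ℝ) * ∏ i ∈ Finset.Icc 1 k, ((m:ℝ) - k + i) := by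
    have h := fact_prod_shift (m-k) k
    rw [show m - k + k = m from by omega] at h
    calc (m ! : ℝ) = (((m-k)! * ∏ i ∈ Finset.Icc 1 k, (m - k + i) : ℕ) : ℝ) := by rw [← h]
    _ = ((m-k)! : ℝ) * ∏ i ∈ Finset.Icc 1 k, ((m:ℝ) - k + i) := by
        push_cast [Nat.cast_sub hkm]; ring
  have hP1pos : 0 < ∏ i ∈ Finset.Icc 1 k, ((m:ℝ) + i) :=
    Finset.prod_pos fun i _ => by positivity
  have hP2pos : 0 < ∏ i ∈ Finset.Icc 1 k, ((m:ℝ) - k + i) :=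
    Finset.prod_pos fun i hi => by
      have hi1 : 1 ≤ i := (Finset.mem_Icc.mp hi).1
      have : (1:ℝ) ≤ i := by exact_mod_cast hi1
      linarith
  have hch : (((m+m).choose (m + k) : ℝ)) / (((m+m).choose m : ℝ))
      = (∏ i ∈ Finset.Icc 1 k, ((m:ℝ) - k + i)) / ∏ i ∈ Finset.Icc 1 k, ((m:ℝ) + i) := by
    rw [Nat.cast_choose ℝ (by omega : m + k ≤ m + m),
        Nat.cast_choose ℝ (by omega : m ≤ m + m),
        show m + m - (m + k) = m - k from by omega,
        show m + m - m = m from by omega]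
    rw [hfact1, hfact2]
    have h1 : ((m-k)! : ℝ) ≠ 0 := by positivity
    have h3 : ((m+m)! : ℝ) ≠ 0 := by positivity
    field_simp
  -- per-term identity
  have hterm : ∀ i ∈ Finset.Icc 1 k,
      ((m:ℝ) - k + i) * g (m + i)
        = (Real.Gamma (1 + 2 * (i:ℝ) / b) / Real.Gamma (1 + 2 * ((i:ℝ) - k) / b))
          * g (m - k + i) * ((m:ℝ) + i) := by
    intro i hi
    obtain ⟨hi1, hik⟩ := Finset.mem_Icc.mp hi
    have hi1R : (1:ℝ) ≤ i := by exact_mod_cast hi1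
    have hikR : (i:ℝ) ≤ k := by exact_mod_cast hik
    have hpos1 : (0:ℝ) < 1 + 2 * (i:ℝ) / b := by positivity
    have hr2 : 1 + 2 * ((i:ℝ) - k) / b = ((m:ℝ) - k + i) / m := by
      rw [hb2m]; field_simp; ring
    have hr1 : 1 + 2 * (i:ℝ) / b = ((m:ℝ) + i) / m := by
      rw [hb2m]; field_simp
    have hpos2 : (0:ℝ) < 1 + 2 * ((i:ℝ) - k) / b := by
      rw [hr2]
      apply div_pos _ hm0
      linarith
    have hnum : Real.Gamma (1 + 2 * ((m:ℝ) + i) / b)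
        = (1 + 2 * (i:ℝ) / b) * Real.Gamma (1 + 2 * (i:ℝ) / b) := by
      rw [show 1 + 2 * ((m:ℝ) + i) / b = (1 + 2 * (i:ℝ) / b) + 1 from by
        rw [hb2m]; field_simp; ring]
      rw [Real.Gamma_add_one hpos1.ne']
    have hden : Real.Gamma (1 + 2 * ((m:ℝ) - k + i) / b)
        = (1 + 2 * ((i:ℝ) - k) / b) * Real.Gamma (1 + 2 * ((i:ℝ) - k) / b) := by
      rw [show 1 + 2 * ((m:ℝ) - k + i) / b = (1 + 2 * ((i:ℝ) - k) / b) + 1 from by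
        rw [hb2m]; field_simp; ring]
      rw [Real.Gamma_add_one hpos2.ne']
    have e1 : g (m + i) = Real.Gamma (1 + 2 * ((m:ℝ) + i) / b) / Real.Gamma (1 + 2 / b) := by
      simp only [hg]; push_cast; ring_nf
    have e2 : g (m - k + i)
        = Real.Gamma (1 + 2 * ((m:ℝ) - k + i) / b) / Real.Gamma (1 + 2 / b) := by
      simp only [hg]; push_cast [Nat.cast_sub hkm]; ring_nf
    rw [e1, e2, hnum, hden]
    -- abstract the Gamma values
    set G1 : ℝ := Real.Gamma (1 + 2 * (i:ℝ) / b) with hG1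
    set G2 : ℝ := Real.Gamma (1 + 2 * ((i:ℝ) - k) / b) with hG2
    set C : ℝ := Real.Gamma (1 + 2 / b) with hC
    have hG2' : G2 ≠ 0 := (Real.Gamma_pos_of_pos hpos2).ne'
    rw [hr1, hr2]
    rw [div_mul_eq_mul_div G1 G2, div_mul_eq_mul_div, div_mul_eq_mul_div,
        eq_div_iff hG2']
    field_simp
  -- key product identity
  have hkey : (((m+m).choose (m + k) : ℝ)) / (((m+m).choose m : ℝ))
        * ∏ i ∈ Finset.Icc 1 k, g (m + i)
      = (∏ j ∈ Finset.Icc 1 k,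
            Real.Gamma (1 + 2 * (j:ℝ) / b) / Real.Gamma (1 + 2 * ((j:ℝ) - k) / b))
        * ∏ i ∈ Finset.Icc 1 k, g (m - k + i) := by
    rw [hch, div_mul_eq_mul_div, div_eq_iff hP1pos.ne']
    rw [← Finset.prod_mul_distrib, ← Finset.prod_mul_distrib, ← Finset.prod_mul_distrib]
    exact Finset.prod_congr rfl hterm
  -- identify the products in the goal
  rw [hIcc (m+k), hIcc (m-k), hIcc m, hsplit1, hsplit2, hre1, hre2]
  -- abbreviations
  set R : ℝ := ∏ j ∈ Finset.Icc 1 k,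
      Real.Gamma (1 + 2 * (j:ℝ) / b) / Real.Gamma (1 + 2 * ((j:ℝ) - k) / b) with hR
  set P1 : ℝ := ∏ i ∈ Finset.Icc 1 k, g (m + i) with hP1
  set P2 : ℝ := ∏ i ∈ Finset.Icc 1 k, g (m - k + i) with hP2
  set F2 : ℝ := ∏ j ∈ Finset.Ioc 0 (m-k), g j with hF2
  have hF2pos : 0 < F2 := Finset.prod_pos fun j _ => hgpos j
  have hP1pos' : 0 < P1 := Finset.prod_pos fun j _ => hgpos _
  have hP2pos' : 0 < P2 := Finset.prod_pos fun j _ => hgpos _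
  have hRpos : 0 < R := Finset.prod_pos fun j hj => by
    obtain ⟨hj1, hjk⟩ := Finset.mem_Icc.mp hj
    have hj1R : (1:ℝ) ≤ j := by exact_mod_cast hj1
    have hjkR : (j:ℝ) ≤ k := by exact_mod_cast hjk
    apply div_pos (hGpos j)
    apply Real.Gamma_pos_of_pos
    rw [show 1 + 2 * ((j:ℝ) - k) / b = ((m:ℝ) + (j - k)) / m from by
      rw [hb2m]; field_simp]
    apply div_pos _ hm0
    linarith
  -- power of π identity
  have hπ : Real.pi ^ (((m+k : ℕ):ℝ) / 2) * Real.pi ^ (((m-k : ℕ):ℝ) / 2)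
      = (Real.pi ^ (((m:ℕ):ℝ) / 2)) ^ 2 := by
    rw [sq, ← Real.rpow_add Real.pi_pos, ← Real.rpow_add Real.pi_pos]
    congr 1
    rw [Nat.cast_sub hkm]
    push_cast
    ring
  -- power of 2 identity
  have h2 : (2:ℝ) ^ ((((m+k:ℕ):ℝ) * (((m+k:ℕ):ℝ) - 1)) / b)
        * (2:ℝ) ^ ((((m-k:ℕ):ℝ) * (((m-k:ℕ):ℝ) - 1)) / b)
      = ((2:ℝ) ^ ((((m:ℕ):ℝ) * (((m:ℕ):ℝ) - 1)) / b)) ^ 2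
        * (2:ℝ) ^ ((2 * (k:ℝ) ^ 2) / b) := by
    rw [sq, ← Real.rpow_add two_pos, ← Real.rpow_add two_pos, ← Real.rpow_add two_pos]
    congr 1
    rw [Nat.cast_sub hkm]
    field_simp
    push_cast
    ring
  set A : ℝ := Real.pi ^ (((m:ℕ):ℝ) / 2) with hA
  set A1 : ℝ := Real.pi ^ (((m+k:ℕ):ℝ) / 2) with hA1d
  set A2 : ℝ := Real.pi ^ (((m-k:ℕ):ℝ) / 2) with hA2d
  set B : ℝ := (2:ℝ) ^ ((((m:ℕ):ℝ) * (((m:ℕ):ℝ) - 1)) / b) with hB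
  set B1 : ℝ := (2:ℝ) ^ ((((m+k:ℕ):ℝ) * (((m+k:ℕ):ℝ) - 1)) / b) with hB1d
  set B2 : ℝ := (2:ℝ) ^ ((((m-k:ℕ):ℝ) * (((m-k:ℕ):ℝ) - 1)) / b) with hB2d
  set T : ℝ := (2:ℝ) ^ ((2 * (k:ℝ) ^ 2) / b) with hT
  have hApos : 0 < A := Real.rpow_pos_of_pos Real.pi_pos _
  have hA1pos : 0 < A1 := Real.rpow_pos_of_pos Real.pi_pos _
  have hA2pos : 0 < A2 := Real.rpow_pos_of_pos Real.pi_pos _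
  have hBpos : 0 < B := Real.rpow_pos_of_pos two_pos _
  have hB1pos : 0 < B1 := Real.rpow_pos_of_pos two_pos _
  have hB2pos : 0 < B2 := Real.rpow_pos_of_pos two_pos _
  have hTpos : 0 < T := Real.rpow_pos_of_pos two_pos _
  -- choose ratio rewritten
  have hckey : (((m+m).choose (m + k) : ℝ)) / (((m+m).choose m : ℝ))
      = R * P2 / P1 := by
    rw [eq_div_iff hP1pos'.ne', hkey]
  have hA1' : A1 = A ^ 2 / A2 := by
    rw [eq_div_iff hA2pos.ne']; exact hπ
  have hB1' : B1 = B ^ 2 * T / B2 := by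
    rw [eq_div_iff hB2pos.ne']; exact h2
  rw [hckey, hA1', hB1']
  field_simp
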